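/- Let f(z) = z + β + ∫_ℝ (1+tz)/(t−z) dμ(t) on the upper half-plane H, where μ is a symmetric finite positive Borel measure with ∫_ℝ |t| dμ(t) = ∞ and β ≠ 0. Define p₂(z) = ∫_{(0,+∞)} 2(1+t²)(t²+|z|²)/|t²−z²|² dμ(t) for z ∈ H. Then for every z₀ ∈ H, liminf_{n→∞} (|x_n|/y_n)·p₂(z_n) = 0, where z_n = f^n(z₀), x_n = Re z_n, y_n = Im z_n. -/

import Mathlib

open MeasureTheory Filter Complex Topology

/-- The parabolic self-map of the upper half-plane associated to `β` and `μ`: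
`f(z) = z + β + ∫ (1+tz)/(t−z) dμ(t)`. -/
noncomputable def fmap (β : ℝ) (μ : Measure ℝ) (z : ℂ) : ℂ :=
  z + (β : ℂ) + ∫ t : ℝ, (1 + (t : ℂ) * z) / ((t : ℂ) - z) ∂μ

/-- The pseudo-hyperbolic distance on the upper half-plane:
`ρ(z,w) = |z−w|/|z−conj w|`. -/
noncomputable def pseudoHyp (z w : ℂ) : ℝ :=
  ‖z - w‖ / ‖z - (starRingEnd ℂ) w‖

/-- `f` is of zero hyperbolic step: there exists `z` in the upper half-plane with
`ρ(f^[n+1] z, f^[n] z) → 0`. -/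
def ZeroHS (f : ℂ → ℂ) : Prop :=
  ∃ z : ℂ, 0 < z.im ∧
    Tendsto (fun n : ℕ => pseudoHyp (f^[n + 1] z) (f^[n] z)) atTop (𝓝 0)
/-- `p₂(z) = ∫_{(0,+∞)} 2(1+t²)(t²+|z|²)/|t²−z²|² dμ(t)`. -/
noncomputable def ptwo (μ : Measure ℝ) (z : ℂ) : ℝ :=
  ∫ t in Set.Ioi (0 : ℝ),
    2 * (1 + t ^ 2) * (t ^ 2 + ‖z‖ ^ 2) /
      ‖(t : ℂ) ^ 2 - z ^ 2‖ ^ 2 ∂μ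

set_option linter.unusedSectionVars false


noncomputable def hker (z : ℂ) (t : ℝ) : ℝ := (1 + t^2) / ((t - z.re)^2 + z.im^2)

noncomputable def Cb (z : ℂ) : ℝ := (2*z.im^2 + 1 + 2*z.re^2) / z.im^2

lemma D1_pos (z : ℂ) (hz : 0 < z.im) (t : ℝ) : 0 < (t - z.re)^2 + z.im^2 := by positivity

lemma hker_nonneg (z : ℂ) (t : ℝ) : 0 ≤ hker z t := by
  unfold hker; positivity

lemma hker_le (z : ℂ) (hz : 0 < z.im) (t : ℝ) : hker z t ≤ Cb z := by
  unfold hker Cb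
  have hD := D1_pos z hz t
  have hy2 : (0:ℝ) < z.im^2 := by positivity
  rw [div_le_div_iff₀ hD hy2]
  nlinarith [sq_nonneg (t - 2*z.re), sq_nonneg (t - z.re), sq_nonneg (z.im*z.im),
    mul_le_mul_of_nonneg_right (show t^2 ≤ 2*(t-z.re)^2 + 2*z.re^2 by nlinarith [sq_nonneg (t - 2*z.re)]) (le_of_lt hy2)]

lemma hker_cont (z : ℂ) (hz : 0 < z.im) : Continuous (hker z) := by
  unfold hker
  exact (continuous_const.add (continuous_id.pow 2)).div
    (((continuous_id.sub continuous_const).pow 2).add continuous_const)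
    (fun t => (D1_pos z hz t).ne')

lemma int_hker (μ : Measure ℝ) [IsFiniteMeasure μ] (z : ℂ) (hz : 0 < z.im) :
    Integrable (hker z) μ := by
  refine Integrable.mono' (integrable_const (Cb z)) (hker_cont z hz).aestronglyMeasurable ?_
  filter_upwards with t
  rw [Real.norm_eq_abs, _root_.abs_of_nonneg (hker_nonneg z t)]
  exact hker_le z hz t

lemma int_hker_neg (μ : Measure ℝ) [IsFiniteMeasure μ] (z : ℂ) (hz : 0 < z.im) :
    Integrable (fun t => hker z (-t)) μ := by
  refine Integrable.mono' (integrable_const (Cb z)) ((hker_cont z hz).comp continuous_neg).aestronglyMeasurable ?_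
  filter_upwards with t
  rw [Real.norm_eq_abs, _root_.abs_of_nonneg (hker_nonneg z (-t))]
  exact hker_le z hz (-t)


noncomputable def Rker (z : ℂ) (t : ℝ) : ℝ :=
  ((1 + t*z.re)*(t - z.re) - t*z.im^2) / ((t - z.re)^2 + z.im^2)

lemma sub_ne (z : ℂ) (hz : 0 < z.im) (t : ℝ) : (t:ℂ) - z ≠ 0 := by
  intro h
  have := congrArg Complex.im h
  simp at this
  linarith

lemma key_formula (z : ℂ) (hz : 0 < z.im) (t : ℝ) :
    (1 + (t:ℂ)*z)/((t:ℂ)-z)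
      = (Rker z t : ℂ) + ((z.im * hker z t : ℝ) : ℂ) * Complex.I := by
  have hne := sub_ne z hz t
  have hD : ((t - z.re)^2 + z.im^2) ≠ 0 := (D1_pos z hz t).ne'
  rw [div_eq_iff hne]
  unfold Rker hker
  rw [Complex.ext_iff]
  constructor
  · simp only [Complex.add_re, Complex.add_im, Complex.mul_re, Complex.mul_im,
      Complex.ofReal_re, Complex.ofReal_im, Complex.sub_re, Complex.sub_im,
      Complex.one_re, Complex.one_im, Complex.I_re, Complex.I_im]
    field_simp
    ring
  · simp only [Complex.add_re, Complex.add_im, Complex.mul_re, Complex.mul_im,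
      Complex.ofReal_re, Complex.ofReal_im, Complex.sub_re, Complex.sub_im,
      Complex.one_re, Complex.one_im, Complex.I_re, Complex.I_im]
    field_simp
    ring

lemma im_integrand (z : ℂ) (hz : 0 < z.im) (t : ℝ) :
    ((1 + (t:ℂ)*z)/((t:ℂ)-z)).im = z.im * hker z t := by
  rw [key_formula z hz t]; simp

lemma re_integrand (z : ℂ) (hz : 0 < z.im) (t : ℝ) :
    ((1 + (t:ℂ)*z)/((t:ℂ)-z)).re = Rker z t := by
  rw [key_formula z hz t]; simp

lemma pair_est (z : ℂ) (hz : 0 < z.im) (t : ℝ) :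
    |Rker z t + Rker z (-t)| ≤ |z.re| * (hker z t + hker z (-t)) := by
  have hD1 := D1_pos z hz t
  have hD2 := D1_pos z hz (-t)
  have hkey : Rker z t + Rker z (-t)
      = (2*z.re*(1+t^2)*(t^2 - z.re^2 - z.im^2)) /
        (((t - z.re)^2 + z.im^2) * ((-t - z.re)^2 + z.im^2)) := by
    unfold Rker
    field_simp
    ring
  have hsum : hker z t + hker z (-t)
      = ((1+t^2) * (2*(t^2 + z.re^2 + z.im^2))) /
        (((t - z.re)^2 + z.im^2) * ((-t - z.re)^2 + z.im^2)) := by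
    unfold hker
    field_simp
    ring
  rw [hkey, hsum, abs_div, abs_of_pos (mul_pos hD1 hD2), ← mul_div_assoc]
  have hDD : (0:ℝ) < ((t - z.re)^2 + z.im^2) * ((-t - z.re)^2 + z.im^2) := mul_pos hD1 hD2
  rw [div_le_div_iff_of_pos_right hDD]
  have habs : |t^2 - z.re^2 - z.im^2| ≤ t^2 + z.re^2 + z.im^2 := by
    rw [abs_le]; constructor <;> nlinarith [sq_nonneg t, sq_nonneg z.re, sq_nonneg z.im]
  calc |2*z.re*(1+t^2)*(t^2 - z.re^2 - z.im^2)|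
      = 2 * |z.re| * (1+t^2) * |t^2 - z.re^2 - z.im^2| := by
        rw [abs_mul, abs_mul, abs_mul]
        rw [abs_of_pos (by norm_num : (0:ℝ) < 2), _root_.abs_of_pos (by positivity : (0:ℝ) < 1+t^2)]
    _ ≤ 2 * |z.re| * (1+t^2) * (t^2 + z.re^2 + z.im^2) := by
        gcongr
    _ = |z.re| * ((1+t^2) * (2*(t^2 + z.re^2 + z.im^2))) := by ring

lemma abs_sq_sub (z : ℂ) (t : ℝ) :
    (‖(t:ℂ) - z‖)^2 = (t - z.re)^2 + z.im^2 := by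
  rw [Complex.sq_norm, Complex.normSq_apply]
  simp
  ring

lemma ptwo_integrand_eq (z : ℂ) (hz : 0 < z.im) (t : ℝ) :
    2 * (1 + t ^ 2) * (t ^ 2 + ‖z‖ ^ 2) /
      ‖(t : ℂ) ^ 2 - z ^ 2‖ ^ 2 = hker z t + hker z (-t) := by
  have e1 : ((t:ℂ)^2 - z^2) = ((t:ℂ) - z) * ((t:ℂ) + z) := by ring
  have e2 : (‖(t:ℂ) + z‖)^2 = (-t - z.re)^2 + z.im^2 := by
    have h := abs_sq_sub z (-t)
    rw [show ((-t:ℝ):ℂ) - z = -((t:ℂ) + z) by push_cast; ring, norm_neg] at h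
    exact h
  have e3 : ‖z‖^2 = z.re^2 + z.im^2 := by
    rw [Complex.sq_norm, Complex.normSq_apply]; ring
  rw [e1, norm_mul, mul_pow, abs_sq_sub, e2, e3]
  have hD1 := D1_pos z hz t
  have hD2 := D1_pos z hz (-t)
  unfold hker
  field_simp
  ring

noncomputable def CC (z : ℂ) : ℝ :=
  Real.sqrt ((1 + z.re^2 + z.im^2) * ((2*z.im^2 + 1 + 2*z.re^2) / z.im^2))

lemma abs_integrand_le (z : ℂ) (hz : 0 < z.im) (t : ℝ) :
    ‖(1 + (t:ℂ)*z)/((t:ℂ)-z)‖ ≤ CC z := by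
  have hD1 := D1_pos z hz t
  have hy2 : (0:ℝ) < z.im^2 := by positivity
  have hC0 : (0:ℝ) ≤ (1 + z.re^2 + z.im^2) * ((2*z.im^2 + 1 + 2*z.re^2) / z.im^2) := by positivity
  have hsq : (‖(1 + (t:ℂ)*z)/((t:ℂ)-z)‖)^2
      ≤ (1 + z.re^2 + z.im^2) * ((2*z.im^2 + 1 + 2*z.re^2) / z.im^2) := by
    rw [norm_div, div_pow, abs_sq_sub]
    have e4 : (‖1 + (t:ℂ)*z‖)^2 = (1 + t*z.re)^2 + (t*z.im)^2 := by
      rw [Complex.sq_norm, Complex.normSq_apply]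
      simp
      ring
    rw [e4, div_le_iff₀ hD1]
    have h1 : (1 + t*z.re)^2 + (t*z.im)^2 ≤ (1+t^2) * (1 + z.re^2 + z.im^2) := by
      nlinarith [sq_nonneg (t - z.re)]
    have h2 : (1+t^2) * (1 + z.re^2 + z.im^2)
        ≤ (1 + z.re^2 + z.im^2) * ((2*z.im^2 + 1 + 2*z.re^2) / z.im^2) * ((t - z.re)^2 + z.im^2) := by
      have h3 : (1+t^2) ≤ (2*z.im^2 + 1 + 2*z.re^2) / z.im^2 * ((t - z.re)^2 + z.im^2) := by
        rw [div_mul_eq_mul_div, le_div_iff₀ hy2]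
        nlinarith [mul_le_mul_of_nonneg_right (show t^2 ≤ 2*(t-z.re)^2 + 2*z.re^2 by nlinarith [sq_nonneg (t - 2*z.re)]) (le_of_lt hy2), sq_nonneg (z.im*z.im), sq_nonneg ((t-z.re)*z.im)]
      calc (1+t^2) * (1 + z.re^2 + z.im^2)
          = (1 + z.re^2 + z.im^2) * (1+t^2) := by ring
        _ ≤ (1 + z.re^2 + z.im^2) * ((2*z.im^2 + 1 + 2*z.re^2) / z.im^2 * ((t - z.re)^2 + z.im^2)) := by
            apply mul_le_mul_of_nonneg_left h3 (by positivity)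
        _ = (1 + z.re^2 + z.im^2) * ((2*z.im^2 + 1 + 2*z.re^2) / z.im^2) * ((t - z.re)^2 + z.im^2) := by ring
    linarith
  have := Real.sqrt_le_sqrt hsq
  rwa [Real.sqrt_sq (norm_nonneg _)] at this

lemma cont_integrand (z : ℂ) (hz : 0 < z.im) :
    Continuous (fun t : ℝ => (1 + (t:ℂ)*z)/((t:ℂ)-z)) := by
  apply Continuous.div
  · continuity
  · continuity
  · exact fun t => sub_ne z hz t

lemma int_integrand (μ : Measure ℝ) [IsFiniteMeasure μ] (z : ℂ) (hz : 0 < z.im) :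
    Integrable (fun t : ℝ => (1 + (t:ℂ)*z)/((t:ℂ)-z)) μ := by
  refine Integrable.mono' (integrable_const (CC z)) (cont_integrand z hz).aestronglyMeasurable ?_
  filter_upwards with t
  exact abs_integrand_le z hz t

noncomputable def Pint (μ : Measure ℝ) (z : ℂ) : ℝ := ∫ t, hker z t ∂μ

lemma Pint_nonneg (μ : Measure ℝ) (z : ℂ) : 0 ≤ Pint μ z :=
  integral_nonneg (fun t => hker_nonneg z t)

section sym
variable {μ : Measure ℝ} [IsFiniteMeasure μ]

lemma map_neg_eq_self (hsym : ∀ A : Set ℝ, MeasurableSet A → μ A = μ ((fun t : ℝ => -t) ⁻¹' A)) :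
    μ.map (fun t : ℝ => -t) = μ := by
  ext A hA
  rw [Measure.map_apply measurable_neg hA]
  exact (hsym A hA).symm

lemma integral_comp_neg (hmap : μ.map (fun t : ℝ => -t) = μ) (φ : ℝ → ℝ)
    (hφ : AEStronglyMeasurable φ μ) :
    ∫ t, φ (-t) ∂μ = ∫ t, φ t ∂μ := by
  conv_rhs => rw [← hmap]
  rw [integral_map measurable_neg.aemeasurable (by rwa [hmap])]

lemma setIntegral_comp_neg (hmap : μ.map (fun t : ℝ => -t) = μ) (φ : ℝ → ℝ)
    (hφ : AEStronglyMeasurable φ μ) :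
    ∫ t in Set.Iio (0:ℝ), φ t ∂μ = ∫ t in Set.Ioi (0:ℝ), φ (-t) ∂μ := by
  conv_lhs => rw [← hmap]
  rw [setIntegral_map measurableSet_Iio (by rwa [hmap]) measurable_neg.aemeasurable]
  congr 1
  ext u
  simp

lemma ptwo_le_Pint (hmap : μ.map (fun t : ℝ => -t) = μ) (z : ℂ) (hz : 0 < z.im) :
    ptwo μ z ≤ Pint μ z := by
  have hint := int_hker μ z hz
  have hintneg := int_hker_neg μ z hz
  have h1 : ptwo μ z = ∫ t in Set.Ioi (0:ℝ), (hker z t + hker z (-t)) ∂μ := by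
    unfold ptwo
    apply integral_congr_ae
    filter_upwards with t
    exact ptwo_integrand_eq z hz t
  rw [h1]
  rw [integral_add (hint.integrableOn) (hintneg.integrableOn)]
  rw [← setIntegral_comp_neg hmap (hker z) (hker_cont z hz).aestronglyMeasurable]
  rw [← setIntegral_union (by simp [Set.disjoint_left]; exact fun a ha => ha.le) measurableSet_Iio
    hint.integrableOn hint.integrableOn]
  unfold Pint
  apply setIntegral_le_integral hint
  filter_upwards with t
  exact hker_nonneg z t



lemma ptwo_nonneg (μ : Measure ℝ) (z : ℂ) : 0 ≤ ptwo μ z := by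
  apply setIntegral_nonneg measurableSet_Ioi
  intro t ht
  positivity

lemma Rker_cont (z : ℂ) (hz : 0 < z.im) : Continuous (Rker z) := by
  unfold Rker
  apply Continuous.div (by continuity) (by continuity) (fun t => (D1_pos z hz t).ne')

lemma abs_Rker_le (z : ℂ) (hz : 0 < z.im) (t : ℝ) : |Rker z t| ≤ CC z := by
  rw [← re_integrand z hz t]
  exact (Complex.abs_re_le_norm _).trans (abs_integrand_le z hz t)

lemma int_Rker (μ : Measure ℝ) [IsFiniteMeasure μ] (z : ℂ) (hz : 0 < z.im) :
    Integrable (Rker z) μ := by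
  refine Integrable.mono' (integrable_const (CC z)) (Rker_cont z hz).aestronglyMeasurable ?_
  filter_upwards with t
  rw [Real.norm_eq_abs]
  exact abs_Rker_le z hz t

lemma int_Rker_neg (μ : Measure ℝ) [IsFiniteMeasure μ] (z : ℂ) (hz : 0 < z.im) :
    Integrable (fun t => Rker z (-t)) μ := by
  refine Integrable.mono' (integrable_const (CC z)) ((Rker_cont z hz).comp continuous_neg).aestronglyMeasurable ?_
  filter_upwards with t
  rw [Real.norm_eq_abs]
  exact abs_Rker_le z hz (-t)

section fmaplem
variable (μ : Measure ℝ) [IsFiniteMeasure μ]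

lemma fmap_im (β : ℝ) (z : ℂ) (hz : 0 < z.im) :
    (fmap β μ z).im = z.im * (1 + Pint μ z) := by
  unfold fmap
  rw [Complex.add_im, Complex.add_im]
  rw [show (∫ t : ℝ, (1 + (t:ℂ)*z)/((t:ℂ)-z) ∂μ).im
      = ∫ t : ℝ, ((1 + (t:ℂ)*z)/((t:ℂ)-z)).im ∂μ from (integral_im (int_integrand μ z hz)).symm]
  rw [show (∫ t : ℝ, ((1 + (t:ℂ)*z)/((t:ℂ)-z)).im ∂μ) = ∫ t : ℝ, z.im * hker z t ∂μ from
    integral_congr_ae (.of_forall fun t => im_integrand z hz t)]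
  rw [MeasureTheory.integral_const_mul z.im]
  simp only [Complex.ofReal_im, add_zero]
  unfold Pint; ring

lemma fmap_re (β : ℝ) (z : ℂ) (hz : 0 < z.im) :
    (fmap β μ z).re = z.re + β + ∫ t : ℝ, Rker z t ∂μ := by
  unfold fmap
  rw [Complex.add_re, Complex.add_re]
  rw [show (∫ t : ℝ, (1 + (t:ℂ)*z)/((t:ℂ)-z) ∂μ).re
      = ∫ t : ℝ, ((1 + (t:ℂ)*z)/((t:ℂ)-z)).re ∂μ from (integral_re (int_integrand μ z hz)).symm]
  rw [show (∫ t : ℝ, ((1 + (t:ℂ)*z)/((t:ℂ)-z)).re ∂μ) = ∫ t : ℝ, Rker z t ∂μ from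
    integral_congr_ae (.of_forall fun t => re_integrand z hz t)]
  simp only [Complex.ofReal_re]

lemma fmap_re_est (hmap : μ.map (fun t : ℝ => -t) = μ) (β : ℝ) (z : ℂ) (hz : 0 < z.im) :
    |(fmap β μ z).re - z.re - β| ≤ |z.re| * Pint μ z := by
  rw [fmap_re μ β z hz]
  have hR := int_Rker μ z hz
  have hRn := int_Rker_neg μ z hz
  have hh := int_hker μ z hz
  have hhn := int_hker_neg μ z hz
  have hpair : ∫ t, (Rker z t + Rker z (-t)) ∂μ = 2 * ∫ t, Rker z t ∂μ := by
    rw [integral_add hR hRn,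
      integral_comp_neg hmap (Rker z) (Rker_cont z hz).aestronglyMeasurable]
    ring
  have h1 : |∫ t, (Rker z t + Rker z (-t)) ∂μ|
      ≤ ∫ t, |z.re| * (hker z t + hker z (-t)) ∂μ := by
    have h0 : |∫ t, (Rker z t + Rker z (-t)) ∂μ| ≤ ∫ t, |Rker z t + Rker z (-t)| ∂μ := by
      simpa [Real.norm_eq_abs] using
        MeasureTheory.norm_integral_le_integral_norm (μ := μ) (fun t => Rker z t + Rker z (-t))
    refine h0.trans ?_
    refine integral_mono (hR.add hRn).abs ((hh.add hhn).const_mul _) ?_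
    intro t
    exact pair_est z hz t
  have h2 : ∫ t, |z.re| * (hker z t + hker z (-t)) ∂μ = |z.re| * (2 * Pint μ z) := by
    rw [MeasureTheory.integral_const_mul, integral_add hh hhn,
      integral_comp_neg hmap (hker z) (hker_cont z hz).aestronglyMeasurable]
    unfold Pint; ring
  rw [hpair, h2, abs_mul, abs_of_pos (by norm_num : (0:ℝ) < 2)] at h1
  have : z.re + β + (∫ t, Rker z t ∂μ) - z.re - β = ∫ t, Rker z t ∂μ := by ring
  rw [this]
  linarith [abs_nonneg (∫ t, Rker z t ∂μ)]

end fmaplem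

set_option maxHeartbeats 2000000 in
theorem stmt_14 (β : ℝ) (μ : Measure ℝ) [IsFiniteMeasure μ]
    (hsym : ∀ A : Set ℝ, MeasurableSet A → μ A = μ ((fun t : ℝ => -t) ⁻¹' A))
    (hμ : ¬ Integrable (fun t : ℝ => t) μ) (hβ : β ≠ 0) :
    ∀ z₀ : ℂ, 0 < z₀.im →
      Filter.liminf
        (fun n : ℕ =>
          (|((fmap β μ)^[n] z₀).re| / ((fmap β μ)^[n] z₀).im) *
            ptwo μ ((fmap β μ)^[n] z₀))
        atTop = 0 := by
  intro z₀ hz₀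
  have hmap := map_neg_eq_self hsym
  set Z : ℕ → ℂ := fun n => (fmap β μ)^[n] z₀ with hZ
  have hZsucc : ∀ n, Z (n+1) = fmap β μ (Z n) := fun n => by
    simp only [hZ, Function.iterate_succ_apply']
  have him : ∀ n, 0 < (Z n).im := by
    intro n
    induction n with
    | zero => simpa [hZ] using hz₀
    | succ n ih =>
      rw [hZsucc n, fmap_im μ β (Z n) ih]
      have := Pint_nonneg μ (Z n)
      nlinarith
  set y : ℕ → ℝ := fun n => (Z n).im with hy_def
  set P : ℕ → ℝ := fun n => Pint μ (Z n) with hP_def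
  set p2 : ℕ → ℝ := fun n => ptwo μ (Z n) with hp2_def
  set r : ℕ → ℝ := fun n => |(Z n).re| / (Z n).im with hr_def
  set a : ℕ → ℝ := fun n => r n * p2 n with ha_def
  have hyp : ∀ n, 0 < y n := him
  have hP0 : ∀ n, 0 ≤ P n := fun n => Pint_nonneg μ (Z n)
  have hp20 : ∀ n, 0 ≤ p2 n := fun n => ptwo_nonneg μ (Z n)
  have hr0 : ∀ n, 0 ≤ r n := fun n => div_nonneg (abs_nonneg _) (hyp n).le
  have ha0 : ∀ n, 0 ≤ a n := fun n => mul_nonneg (hr0 n) (hp20 n)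
  have hyrec : ∀ n, y (n+1) = y n * (1 + P n) := fun n => by
    show (Z (n+1)).im = _
    rw [hZsucc n, fmap_im μ β (Z n) (him n)]
  have hymono : Monotone y := by
    apply monotone_nat_of_le_succ
    intro n
    rw [hyrec n]
    nlinarith [hP0 n, hyp n]
  have hxrec : ∀ n, |(Z (n+1)).re| ≤ |(Z n).re| * (1 + P n) + |β| := by
    intro n
    have h := fmap_re_est μ hmap β (Z n) (him n)
    rw [hZsucc n]
    have h2 : |(fmap β μ (Z n)).re| ≤ |(Z n).re + β| + |(Z n).re| * P n := by
      calc |(fmap β μ (Z n)).re|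
          = |((Z n).re + β) + ((fmap β μ (Z n)).re - (Z n).re - β)| := by ring_nf
        _ ≤ |(Z n).re + β| + |(fmap β μ (Z n)).re - (Z n).re - β| := abs_add_le _ _
        _ ≤ |(Z n).re + β| + |(Z n).re| * P n := by linarith
    calc |(fmap β μ (Z n)).re| ≤ |(Z n).re + β| + |(Z n).re| * P n := h2
      _ ≤ (|(Z n).re| + |β|) + |(Z n).re| * P n := by linarith [abs_add_le (Z n).re β]
      _ = |(Z n).re| * (1 + P n) + |β| := by ring
  have hrrec : ∀ n, r (n+1) ≤ r n + |β| / y (n+1) := by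
    intro n
    have h1 : 0 < y (n+1) := hyp (n+1)
    have h0 : 0 < y n := hyp n
    have h1P : (0:ℝ) < 1 + P n := by linarith [hP0 n]
    have e : (|(Z n).re| * (1 + P n) + |β|) / y (n+1) = r n + |β| / y (n+1) := by
      rw [hyrec n]
      simp only [hr_def, hy_def]
      field_simp
    rw [← e]
    have e2 : r (n+1) = |(Z (n+1)).re| / y (n+1) := rfl
    rw [e2]
    exact (div_le_div_iff_of_pos_right h1).2 (hxrec n)
  have hp2P : ∀ n, p2 n ≤ P n := fun n => ptwo_le_Pint hmap (Z n) (him n)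
  -- core claim
  have key : ∀ ε : ℝ, 0 < ε → ∀ N : ℕ, ∃ n, N ≤ n ∧ a n < ε := by
    intro ε hε N
    by_contra hcon
    push_neg at hcon
    have hrpos : ∀ n, N ≤ n → 0 < r n := by
      intro n hn
      rcases (hr0 n).lt_or_eq with h | h
      · exact h
      · exfalso
        have hz : a n = 0 := by
          show r n * p2 n = 0
          rw [← h, zero_mul]
        linarith [hcon n hn]
    have hPd : ∀ n, N ≤ n → ε / r n ≤ P n := by
      intro n hn
      rw [div_le_iff₀ (hrpos n hn)]
      calc ε ≤ a n := hcon n hn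
        _ = r n * p2 n := rfl
        _ ≤ r n * P n := mul_le_mul_of_nonneg_left (hp2P n) (hr0 n)
        _ = P n * r n := mul_comm _ _
    set K := |β| / ε with hK
    have hK0 : 0 ≤ K := div_nonneg (abs_nonneg β) hε.le
    have hKe : K * ε = |β| := by rw [hK]; field_simp
    have hstep : ∀ n, N ≤ n →
        r (n+1) ≤ r n * Real.exp (K * (1/y n - 1/y (n+1))) := by
      intro n hn
      have h0 := hyp n
      have h1 := hyp (n+1)
      have hrp := hrpos n hn
      have hyP : y (n+1) - y n = y n * P n := by rw [hyrec n]; ring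
      have hPn := hPd n hn
      have h2 : ε ≤ P n * r n := (div_le_iff₀ hrp).1 hPn
      have hd_ge : ε / (r n * y (n+1)) ≤ 1/y n - 1/y (n+1) := by
        have e1 : 1/y n - 1/y (n+1) = (y (n+1) - y n) / (y n * y (n+1)) := by
          field_simp
        rw [e1, hyP, div_le_div_iff₀ (mul_pos hrp h1) (mul_pos h0 h1)]
        nlinarith [mul_le_mul_of_nonneg_right h2 (le_of_lt (mul_pos h0 h1))]
      have claim1 : |β| / y (n+1) ≤ r n * (K * (1/y n - 1/y (n+1))) := by
        have h3 : |β| / y (n+1) = r n * (K * (ε / (r n * y (n+1)))) := by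
          rw [← hKe]
          field_simp
        rw [h3]
        exact mul_le_mul_of_nonneg_left (mul_le_mul_of_nonneg_left hd_ge hK0) (hr0 n)
      calc r (n+1) ≤ r n + |β| / y (n+1) := hrrec n
        _ ≤ r n + r n * (K * (1/y n - 1/y (n+1))) := by linarith
        _ = r n * (1 + K * (1/y n - 1/y (n+1))) := by ring
        _ ≤ r n * Real.exp (K * (1/y n - 1/y (n+1))) := by
            apply mul_le_mul_of_nonneg_left _ (hr0 n)
            linarith [Real.add_one_le_exp (K * (1/y n - 1/y (n+1)))]
    have hind : ∀ n, N ≤ n → r n ≤ r N * Real.exp (K * (1/y N - 1/y n)) := by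
      intro n hn
      induction n, hn using Nat.le_induction with
      | base => simp
      | succ n hn ih =>
        calc r (n+1) ≤ r n * Real.exp (K * (1/y n - 1/y (n+1))) := hstep n hn
          _ ≤ (r N * Real.exp (K * (1/y N - 1/y n))) * Real.exp (K * (1/y n - 1/y (n+1))) :=
              mul_le_mul_of_nonneg_right ih (Real.exp_nonneg _)
          _ = r N * Real.exp (K * (1/y N - 1/y (n+1))) := by
              rw [mul_assoc, ← Real.exp_add]
              congr 2
              ring
    set M := r N * Real.exp (K / y N) with hM
    have hMub : ∀ n, N ≤ n → r n ≤ M := by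
      intro n hn
      refine (hind n hn).trans ?_
      rw [hM]
      apply mul_le_mul_of_nonneg_left _ (hr0 N)
      apply Real.exp_le_exp.2
      have h5 : 0 < 1 / y n := one_div_pos.2 (hyp n)
      calc K * (1/y N - 1/y n) ≤ K * (1/y N) :=
            mul_le_mul_of_nonneg_left (by linarith) hK0
        _ = K / y N := by ring
    have hMpos : 0 < M := lt_of_lt_of_le (hrpos N le_rfl) (hMub N le_rfl)
    have hgrow : ∀ k, y N * (1 + ε/M)^k ≤ y (N + k) := by
      intro k
      induction k with
      | zero => simp
      | succ k ih =>
        have hn : N ≤ N + k := Nat.le_add_right N k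
        have hPk : ε / M ≤ P (N+k) :=
          le_trans (div_le_div_of_nonneg_left hε.le (hrpos _ hn) (hMub _ hn)) (hPd (N+k) hn)
        have he : y (N + (k+1)) = y (N+k) * (1 + P (N+k)) := by
          rw [show N + (k+1) = (N+k) + 1 from rfl]
          exact hyrec (N+k)
        calc y N * (1+ε/M)^(k+1) = (y N * (1+ε/M)^k) * (1+ε/M) := by ring
          _ ≤ y (N+k) * (1+ε/M) := by
              apply mul_le_mul_of_nonneg_right ih
              have := div_pos hε hMpos
              linarith
          _ ≤ y (N+k) * (1 + P (N+k)) := by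
              apply mul_le_mul_of_nonneg_left (by linarith) (hyp _).le
          _ = y (N + (k+1)) := he.symm
    have hytop : Tendsto y atTop atTop := by
      rw [tendsto_atTop]
      intro b
      have hc1 : 1 < 1 + ε/M := by
        have := div_pos hε hMpos
        linarith
      have hgeo : Tendsto (fun k : ℕ => y N * (1+ε/M)^k) atTop atTop :=
        Tendsto.const_mul_atTop (hyp N) (tendsto_pow_atTop_atTop_of_one_lt hc1)
      obtain ⟨k, hk⟩ := (hgeo.eventually (Filter.eventually_ge_atTop b)).exists
      rw [Filter.eventually_atTop]
      refine ⟨N + k, fun n hn => ?_⟩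
      exact le_trans (le_trans hk (hgrow k)) (hymono hn)
    set C0 : ℝ := 2 * (2 + 1/(y N)^2 + 2*M^2) with hC0
    have hbound : ∀ n, N ≤ n → ∀ t : ℝ, hker (Z n) t + hker (Z n) (-t) ≤ C0 := by
      intro n hn t
      have h5 : Cb (Z n) ≤ 2 + 1/(y N)^2 + 2*M^2 := by
        have e : Cb (Z n) = 2 + 1/(y n)^2 + 2*(r n)^2 := by
          unfold Cb
          simp only [hr_def, hy_def]
          rw [div_pow, _root_.sq_abs]
          have him' := (him n).ne'
          field_simp
        rw [e]
        have h6 : 1/(y n)^2 ≤ 1/(y N)^2 := by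
          apply one_div_le_one_div_of_le (pow_pos (hyp N) 2)
          have h7 := hymono hn
          nlinarith [hyp N]
        have h7 : (r n)^2 ≤ M^2 := by nlinarith [hr0 n, hMub n hn]
        linarith
      have hb1 := (hker_le (Z n) (him n) t).trans h5
      have hb2 := (hker_le (Z n) (him n) (-t)).trans h5
      rw [hC0]
      linarith
    have hptwise : ∀ t : ℝ,
        Tendsto (fun k => hker (Z (N+k)) t + hker (Z (N+k)) (-t)) atTop (𝓝 0) := by
      intro t
      have hyk : Tendsto (fun k => y (N+k)) atTop atTop :=
        hytop.comp (tendsto_atTop_mono (fun k => Nat.le_add_left k N) tendsto_id)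
      have hsq : Tendsto (fun k => (y (N+k))^2) atTop atTop := by
        simpa [pow_two] using hyk.atTop_mul_atTop₀ hyk
      have hinv : Tendsto (fun k => (2*(1+t^2)) / (y (N+k))^2) atTop (𝓝 0) :=
        Tendsto.div_atTop tendsto_const_nhds hsq
      apply squeeze_zero
      · intro k
        have h1 := hker_nonneg (Z (N+k)) t
        have h2 := hker_nonneg (Z (N+k)) (-t)
        linarith
      · intro k
        have hyy := hyp (N+k)
        have h8 : hker (Z (N+k)) t ≤ (1+t^2)/(y (N+k))^2 := by
          unfold hker
          apply div_le_div_of_nonneg_left (by positivity) (pow_pos hyy 2)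
          nlinarith [sq_nonneg (t - (Z (N+k)).re)]
        have h9 : hker (Z (N+k)) (-t) ≤ (1+t^2)/(y (N+k))^2 := by
          unfold hker
          have e : (1 + (-t)^2 : ℝ) = 1 + t^2 := by ring
          rw [e]
          apply div_le_div_of_nonneg_left (by positivity) (pow_pos hyy 2)
          nlinarith [sq_nonneg (-t - (Z (N+k)).re)]
        have e2 : (1+t^2)/(y (N+k))^2 + (1+t^2)/(y (N+k))^2 = 2*(1+t^2)/(y (N+k))^2 := by
          ring
        linarith
      · exact hinv
    have hDCT : Tendsto
        (fun k => ∫ t in Set.Ioi (0:ℝ), (hker (Z (N+k)) t + hker (Z (N+k)) (-t)) ∂μ)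
        atTop (𝓝 0) := by
      have h := MeasureTheory.tendsto_integral_of_dominated_convergence
        (μ := μ.restrict (Set.Ioi 0))
        (F := fun k t => hker (Z (N+k)) t + hker (Z (N+k)) (-t)) (f := fun _ => (0:ℝ))
        (bound := fun _ => C0)
        (fun k => (((hker_cont _ (him _)).add
          ((hker_cont _ (him _)).comp continuous_neg)).aestronglyMeasurable).restrict)
        (integrable_const C0)
        (fun k => Filter.Eventually.of_forall (fun t => by
          have hq1 := hker_nonneg (Z (N+k)) t
          have hq2 := hker_nonneg (Z (N+k)) (-t)
          have hb := hbound (N+k) (Nat.le_add_right N k) t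
          show ‖hker (Z (N+k)) t + hker (Z (N+k)) (-t)‖ ≤ C0
          rw [Real.norm_eq_abs, _root_.abs_of_nonneg (by linarith)]
          exact hb))
        (Filter.Eventually.of_forall (fun t => hptwise t))
      rw [MeasureTheory.integral_zero] at h
      exact h
    have hp2eq : ∀ n, p2 n = ∫ t in Set.Ioi (0:ℝ),
        (hker (Z n) t + hker (Z n) (-t)) ∂μ := by
      intro n
      show ptwo μ (Z n) = _
      unfold ptwo
      exact integral_congr_ae (.of_forall fun t => ptwo_integrand_eq (Z n) (him n) t)
    have hp2tend : Tendsto (fun k => p2 (N+k)) atTop (𝓝 0) := by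
      have := funext (fun k => hp2eq (N+k))
      rw [show (fun k => p2 (N+k)) = fun k => ∫ t in Set.Ioi (0:ℝ),
        (hker (Z (N+k)) t + hker (Z (N+k)) (-t)) ∂μ from funext (fun k => hp2eq (N+k))]
      exact hDCT
    have hev : ∀ᶠ k in atTop, p2 (N+k) < ε / M := by
      have hpos : (0:ℝ) < ε / M := div_pos hε hMpos
      exact hp2tend.eventually (gt_mem_nhds hpos)
    obtain ⟨k, hk⟩ := hev.exists
    have hn : N ≤ N + k := Nat.le_add_right N k
    have hlt : a (N+k) < ε := by
      calc a (N+k) = r (N+k) * p2 (N+k) := rfl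
        _ ≤ M * p2 (N+k) := mul_le_mul_of_nonneg_right (hMub _ hn) (hp20 _)
        _ < M * (ε/M) := by exact mul_lt_mul_of_pos_left hk hMpos
        _ = ε := by field_simp
    linarith [hcon (N+k) hn]
  rw [Filter.liminf_eq]
  have hub : ∀ b ∈ {b : ℝ | ∀ᶠ n in atTop, b ≤ a n}, b ≤ 0 := by
    intro b hb
    by_contra hb0
    push_neg at hb0
    simp only [Set.mem_setOf_eq, Filter.eventually_atTop] at hb
    obtain ⟨N, hN⟩ := hb
    obtain ⟨n, hn, hlt⟩ := key b hb0 N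
    exact absurd (hN n hn) (not_le.2 hlt)
  have h0mem : (0:ℝ) ∈ {b : ℝ | ∀ᶠ n in atTop, b ≤ a n} :=
    Filter.Eventually.of_forall ha0
  exact le_antisymm (csSup_le ⟨0, h0mem⟩ hub) (le_csSup ⟨0, hub⟩ h0mem)
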